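/- Let m, k, ℓ be natural numbers with k ≤ m and ℓ ≤ m - k. For any probability distribution over the k-element subsets S of {1,...,m}, there exists an ℓ-element subset σ of {1,...,m} such that the probability that σ ∩ S is nonempty is at least 1 - C(m-k, ℓ)/C(m, ℓ). -/

import Mathlib

open scoped ENNReal

theorem stmt0 (m k ℓ : ℕ) (hk : k ≤ m) (hℓ : ℓ ≤ m - k)
    (μ : PMF (Finset (Fin m))) (hsupp : ∀ s ∈ μ.support, s.card = k) :
    ∃ σ : Finset (Fin m), σ.card = ℓ ∧
      1 - ((m - k).choose ℓ : ℝ≥0∞) / (m.choose ℓ : ℝ≥0∞) ≤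
        μ.toOuterMeasure {s | (σ ∩ s).Nonempty} := by
  classical
  set A : Finset (Finset (Fin m)) := Finset.powersetCard ℓ Finset.univ with hA
  have hℓm : ℓ ≤ m := hℓ.trans (Nat.sub_le m k)
  have hAcard : A.card = m.choose ℓ := by
    simp [hA, Finset.card_powersetCard]
  have hAne : A.Nonempty := by
    rw [hA, Finset.powersetCard_nonempty]
    simpa using hℓm
  set g : Finset (Fin m) → ℝ≥0∞ :=
    fun σ => ∑ s : Finset (Fin m), if σ ∩ s = ∅ then μ s else 0 with hg
  -- total sum of g over A
  have hsumg : ∑ σ ∈ A, g σ = ((m - k).choose ℓ : ℝ≥0∞) := by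
    rw [hg]
    rw [Finset.sum_comm]
    have : ∀ s : Finset (Fin m),
        (∑ σ ∈ A, if σ ∩ s = ∅ then μ s else 0) = ((m - k).choose ℓ : ℝ≥0∞) * μ s := by
      intro s
      by_cases hs : μ s = 0
      · simp [hs]
      · have hcard : s.card = k := hsupp s hs
        have hfilter : A.filter (fun σ => σ ∩ s = ∅) =
            Finset.powersetCard ℓ (Finset.univ \ s) := by
          ext σ
          simp only [hA, Finset.mem_filter, Finset.mem_powersetCard]
          constructor
          · rintro ⟨⟨-, hc⟩, hdisj⟩
            refine ⟨fun x hx => ?_, hc⟩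
            simp only [Finset.mem_sdiff, Finset.mem_univ, true_and]
            intro hxs
            have : x ∈ σ ∩ s := Finset.mem_inter.2 ⟨hx, hxs⟩
            simp [hdisj] at this
          · rintro ⟨hsub, hc⟩
            refine ⟨⟨Finset.subset_univ _, hc⟩, ?_⟩
            rw [← Finset.disjoint_iff_inter_eq_empty]
            exact Finset.disjoint_left.2 fun x hx hxs =>
              (Finset.mem_sdiff.1 (hsub hx)).2 hxs
        have hcnt : (A.filter (fun σ => σ ∩ s = ∅)).card = (m - k).choose ℓ := by
          rw [hfilter, Finset.card_powersetCard, Finset.card_sdiff_of_subset (Finset.subset_univ s),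
            Finset.card_univ, Fintype.card_fin, hcard]
        calc (∑ σ ∈ A, if σ ∩ s = ∅ then μ s else 0)
            = (A.filter (fun σ => σ ∩ s = ∅)).card • μ s := by
              rw [← Finset.sum_filter, Finset.sum_const]
          _ = ((m - k).choose ℓ : ℝ≥0∞) * μ s := by
              rw [hcnt, nsmul_eq_mul]
    rw [Finset.sum_congr rfl fun s _ => this s, ← Finset.mul_sum]
    have htot : ∑ s : Finset (Fin m), μ s = 1 := by
      rw [← tsum_fintype (L := SummationFilter.unconditional _)]; exact μ.tsum_coe
    rw [htot, mul_one]
  -- pigeonhole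
  have hchoose0 : (m.choose ℓ : ℝ≥0∞) ≠ 0 := by
    exact_mod_cast (Nat.choose_pos hℓm).ne'
  have hconst : ∑ _σ ∈ A, ((m - k).choose ℓ : ℝ≥0∞) / (m.choose ℓ : ℝ≥0∞)
      = ((m - k).choose ℓ : ℝ≥0∞) := by
    rw [Finset.sum_const, hAcard, nsmul_eq_mul]
    exact ENNReal.mul_div_cancel hchoose0 (ENNReal.natCast_ne_top _)
  have hpigeon : ∃ σ ∈ A, g σ ≤ ((m - k).choose ℓ : ℝ≥0∞) / (m.choose ℓ : ℝ≥0∞) :=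
    ENNReal.exists_le_of_sum_le hAne (by rw [hconst, hsumg])
  obtain ⟨σ, hσA, hσle⟩ := hpigeon
  have hσcard : σ.card = ℓ := by
    rw [hA, Finset.mem_powersetCard] at hσA
    exact hσA.2
  refine ⟨σ, hσcard, ?_⟩
  -- compute the measure
  have hP : μ.toOuterMeasure {s | (σ ∩ s).Nonempty}
      = ∑ s : Finset (Fin m), if (σ ∩ s).Nonempty then μ s else 0 := by
    rw [PMF.toOuterMeasure_apply, tsum_fintype]
    exact Finset.sum_congr rfl fun s _ => by
      by_cases h : (σ ∩ s).Nonempty <;> simp [Set.indicator_apply, h]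
  have hadd : μ.toOuterMeasure {s | (σ ∩ s).Nonempty} + g σ = 1 := by
    rw [hP, hg, ← Finset.sum_add_distrib]
    have : ∀ s : Finset (Fin m),
        ((if (σ ∩ s).Nonempty then μ s else 0) + (if σ ∩ s = ∅ then μ s else 0)) = μ s := by
      intro s
      by_cases h : (σ ∩ s).Nonempty
      · have : ¬ (σ ∩ s = ∅) := by
          intro he; rw [he] at h; exact Finset.not_nonempty_empty h
        simp [h, this]
      · have : σ ∩ s = ∅ := Finset.not_nonempty_iff_eq_empty.1 h
        simp [h, this]
    rw [Finset.sum_congr rfl fun s _ => this s, ← tsum_fintype (L := SummationFilter.unconditional _)]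
    exact μ.tsum_coe
  have hgne : g σ ≠ ⊤ := by
    intro h
    rw [h, add_top] at hadd
    exact ENNReal.top_ne_one hadd
  have hPeq : μ.toOuterMeasure {s | (σ ∩ s).Nonempty} = 1 - g σ :=
    ENNReal.eq_sub_of_add_eq hgne hadd
  rw [hPeq]
  exact tsub_le_tsub_left hσle 1
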